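/- arXiv:2410.10364 — 3 statements merged into one kernel-verified Lean document; each statement's English description precedes it below -/
import Mathlib

section
/- Let x ∈ ℝⁿ be weakly decreasing and let h lie in the convex hull C(x) of the Sₙ-orbit of x. Then x − h lies in the closed cone of nonnegative linear combinations of the simple roots αᵢ = eᵢ − eᵢ₊₁. -/
/-- The simple root `αᵢ = eᵢ − eᵢ₊₁` of type `A_{n-1}`, as a vector in `ℝⁿ`. -/
def simpleRoot (n : ℕ) (i : Fin (n - 1)) : Fin n → ℝ :=
  fun j => (if (j : ℕ) = (i : ℕ) then 1 else 0) - (if (j : ℕ) = (i : ℕ) + 1 then 1 else 0)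

private lemma aux_sum_le (n : ℕ) (x : Fin n → ℝ) (hx : ∀ i j : Fin n, i ≤ j → x j ≤ x i) :
    ∀ (k : ℕ) (S : Finset (Fin n)), S.card = k →
      ∑ j ∈ S, x j ≤ ∑ j ∈ Finset.univ.filter (fun j : Fin n => (j : ℕ) < k), x j := by
  intro k
  induction k with
  | zero => intro S hS; rw [Finset.card_eq_zero.mp hS]; simp
  | succ k ih =>
    intro S hS
    have hne : S.Nonempty := Finset.card_pos.mp (by omega)
    set m := S.max' hne with hmdef
    have hm : k ≤ (m : ℕ) := by
      have hsub : S ⊆ Finset.Iic m := fun a ha => Finset.mem_Iic.mpr (S.le_max' a ha)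
      have hcard := Finset.card_le_card hsub
      rw [hS, Fin.card_Iic] at hcard
      omega
    have hkn : k < n := lt_of_le_of_lt hm m.isLt
    set k' : Fin n := ⟨k, hkn⟩ with hk'def
    have hxm : x m ≤ x k' := hx k' m (by rw [Fin.le_def]; exact hm)
    have hins : Finset.univ.filter (fun j : Fin n => (j : ℕ) < k + 1)
        = insert k' (Finset.univ.filter (fun j : Fin n => (j : ℕ) < k)) := by
      ext a
      simp only [Finset.mem_filter, Finset.mem_univ, true_and, Finset.mem_insert, Fin.ext_iff,
        hk'def, Fin.val_mk]
      omega
    have hnot : k' ∉ Finset.univ.filter (fun j : Fin n => (j : ℕ) < k) := by simp [hk'def]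
    rw [hins, Finset.sum_insert hnot]
    rw [← Finset.add_sum_erase S x (S.max'_mem hne)]
    have hec : (S.erase m).card = k := by
      rw [Finset.card_erase_of_mem (S.max'_mem hne), hS]; omega

    exact add_le_add hxm (ih _ hec)

private lemma sum_if_eq (m : ℕ) (f : Fin m → ℝ) (t : ℕ) :
    ∑ i : Fin m, (if t = (i : ℕ) then f i else 0) = if ht : t < m then f ⟨t, ht⟩ else 0 := by
  split
  · next ht =>
    rw [Finset.sum_eq_single (⟨t, ht⟩ : Fin m)]
    · simp
    · intro b _ hb
      rw [if_neg]
      intro hc; exact hb (Fin.ext hc.symm)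
    · simp
  · next ht =>
    apply Finset.sum_eq_zero
    intro i _
    rw [if_neg]
    omega

private lemma sum_if_eq' (m : ℕ) (f : Fin m → ℝ) (t : ℕ) :
    ∑ i : Fin m, (if t = (i : ℕ) + 1 then f i else 0)
      = if ht : 1 ≤ t ∧ t - 1 < m then f ⟨t - 1, ht.2⟩ else 0 := by
  split
  · next ht =>
    rw [Finset.sum_eq_single (⟨t - 1, ht.2⟩ : Fin m)]
    · rw [if_pos (show t = t - 1 + 1 by omega)]
    · intro b _ hb
      rw [if_neg]
      intro hc; exact hb (Fin.ext (show (b : ℕ) = t - 1 by omega))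
    · simp
  · next ht =>
    apply Finset.sum_eq_zero
    intro i _
    rw [if_neg]
    omega

/-- If `x ∈ ℝⁿ` is weakly decreasing and `h` lies in the convex hull of the
`Sₙ`-orbit `{w·x : w ∈ Sₙ}` (where `(w·x)ᵢ = x_{w⁻¹ i}`), then `x − h` lies in the closed cone
of nonnegative combinations of the simple roots `αᵢ = eᵢ − eᵢ₊₁`. -/
theorem stmt2 (n : ℕ) (x : Fin n → ℝ) (hx : ∀ i j : Fin n, i ≤ j → x j ≤ x i)
    (h : Fin n → ℝ)
    (hh : h ∈ convexHull ℝ (Set.range fun w : Equiv.Perm (Fin n) => x ∘ ⇑w⁻¹)) :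
    ∃ c : Fin (n - 1) → ℝ, (∀ i, 0 ≤ c i) ∧
      x - h = ∑ i, c i • simpleRoot n i := by
  set F : ℕ → Finset (Fin n) := fun k => Finset.univ.filter (fun j : Fin n => (j : ℕ) < k)
    with hF
  -- cardinality of initial segments
  have cardF : ∀ k, k ≤ n → (F k).card = k := by
    intro k hk
    have : F k = Finset.map ⟨Fin.castLE hk, Fin.castLE_injective hk⟩ Finset.univ := by
      ext j
      simp only [hF, Finset.mem_filter, Finset.mem_univ, true_and, Finset.mem_map,
        Function.Embedding.coeFn_mk]
      constructor
      · intro hj; exact ⟨⟨(j : ℕ), hj⟩, rfl⟩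
      · rintro ⟨a, rfl⟩; exact a.isLt
    rw [this, Finset.card_map, Finset.card_univ, Fintype.card_fin]
  -- partial sum inequalities
  have key : ∀ k, k ≤ n → ∑ j ∈ F k, h j ≤ ∑ j ∈ F k, x j := by
    intro k hk
    have hlin : IsLinearMap ℝ (fun y : Fin n → ℝ => ∑ j ∈ F k, y j) :=
      ⟨fun a b => by simp [Finset.sum_add_distrib], fun c y => by simp [Finset.mul_sum]⟩
    have hsub : Set.range (fun w : Equiv.Perm (Fin n) => x ∘ ⇑w⁻¹)
        ⊆ {y | ∑ j ∈ F k, y j ≤ ∑ j ∈ F k, x j} := by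
      rintro _ ⟨w, rfl⟩
      have himg : ∑ j ∈ F k, (x ∘ ⇑w⁻¹) j = ∑ j ∈ (F k).image ⇑w⁻¹, x j :=
        (Finset.sum_image (fun a _ b _ hab => (Equiv.injective w⁻¹) hab)).symm
      simp only [Set.mem_setOf_eq, himg]
      have hc : ((F k).image ⇑w⁻¹).card = k := by
        rw [Finset.card_image_of_injective _ (Equiv.injective w⁻¹), cardF k hk]
      exact aux_sum_le n x hx k _ hc
    exact convexHull_min hsub (convex_halfSpace_le hlin _) hh
  -- total sum equality
  have total : ∑ j, h j = ∑ j, x j := by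
    have hlin : IsLinearMap ℝ (fun y : Fin n → ℝ => ∑ j, y j) :=
      ⟨fun a b => by simp [Finset.sum_add_distrib], fun c y => by simp [Finset.mul_sum]⟩
    have hsub : Set.range (fun w : Equiv.Perm (Fin n) => x ∘ ⇑w⁻¹)
        ⊆ {y | ∑ j, y j = ∑ j, x j} := by
      rintro _ ⟨w, rfl⟩
      exact Equiv.sum_comp w⁻¹ x
    exact convexHull_min hsub (convex_hyperplane hlin _) hh
  -- partial sums of the difference
  set dd : ℕ → ℝ := fun k => ∑ j ∈ F k, (x j - h j) with hdd
  have dd0 : dd 0 = 0 := by simp [hdd, hF]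
  have hFn : F n = Finset.univ := by
    ext j; simp [hF, j.isLt]
  have ddn : dd n = 0 := by
    simp only [hdd, hFn, Finset.sum_sub_distrib]
    rw [total]; ring
  have ddnonneg : ∀ k, k ≤ n → 0 ≤ dd k := by
    intro k hk
    simp only [hdd, Finset.sum_sub_distrib]
    have := key k hk
    linarith
  have step : ∀ j : Fin n, dd ((j : ℕ) + 1) - dd (j : ℕ) = x j - h j := by
    intro j
    have hins : F ((j : ℕ) + 1) = insert j (F (j : ℕ)) := by
      ext a
      simp only [hF, Finset.mem_filter, Finset.mem_univ, true_and, Finset.mem_insert, Fin.ext_iff]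
      omega
    have hnot : j ∉ F (j : ℕ) := by simp [hF]
    simp only [hdd]
    rw [hins, Finset.sum_insert hnot]
    ring
  refine ⟨fun i => dd ((i : ℕ) + 1), fun i => ddnonneg _ (by omega), ?_⟩
  funext j
  have hn1 : 0 < n := j.pos
  simp only [Finset.sum_apply, Pi.sub_apply, Pi.smul_apply, simpleRoot, smul_eq_mul, mul_sub,
    mul_ite, mul_one, mul_zero]
  rw [Finset.sum_sub_distrib, sum_if_eq, sum_if_eq']
  have h1 : (if ht : (j : ℕ) < n - 1 then dd ((j : ℕ) + 1) else 0) = dd ((j : ℕ) + 1) := by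
    split
    · rfl
    · next hc =>
      have : (j : ℕ) + 1 = n := by omega
      rw [this, ddn]
  have h2 : (if ht : 1 ≤ (j : ℕ) ∧ (j : ℕ) - 1 < n - 1 then dd ((j : ℕ) - 1 + 1) else 0)
      = dd (j : ℕ) := by
    split
    · next hc =>
      congr 1
      omega
    · next hc =>
      have hj0 : (j : ℕ) = 0 := by omega
      rw [hj0, dd0]
  rw [h1, h2]
  exact (step j).symm
end

section
/- Let G : ℝⁿ → ℂ be a measurable function whose absolute value is 2πℤⁿ-periodic, and let ĥφ : ℝⁿ → ℂ satisfy the two-scale relation ĥφ(2ξ) = G(ξ) ĥφ(ξ) a.e. together with the orthonormality condition (1/n!) Σ_{q∈2πℤⁿ} |ĥφ(ξ+q)|² = 1 a.e. Then Σ_{p ∈ L/I} |G(ξ+p)|² = 1 for almost every ξ, where L = πℤⁿ, I = 2πℤⁿ, and the sum runs over the 2ⁿ coset representatives p ∈ {0,π}ⁿ. -/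
open Real MeasureTheory

/-- Every integer vector decomposes uniquely as a parity vector plus twice an integer vector. -/
def stmt13Equiv (n : ℕ) : ((Fin n → Bool) × (Fin n → ℤ)) ≃ (Fin n → ℤ) where
  toFun p := fun i => (if p.1 i then 1 else 0) + 2 * p.2 i
  invFun q := (fun i => decide (q i % 2 = 1), fun i => q i / 2)
  left_inv p := by
    ext i
    · cases h : p.1 i <;> simp [h] <;> omega
    · cases h : p.1 i <;> simp [h] <;> omega
  right_inv q := by
    funext i
    by_cases h : q i % 2 = 1 <;> simp [h] <;> omega

/-- If a nonnegative family has `N⁻¹ * tsum = 1` with `N > 0`, then the `ℝ≥0∞`-valued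
sum of `ENNReal.ofReal` equals `ENNReal.ofReal N`. -/
lemma stmt13_tsum_ofReal {ι : Type*} [Countable ι] (f : ι → ℝ) (hf : ∀ i, 0 ≤ f i)
    {N : ℝ} (hN : 0 < N) (h : N⁻¹ * ∑' i, f i = 1) :
    ∑' i, ENNReal.ofReal (f i) = ENNReal.ofReal N := by
  have hsum : Summable f := by
    by_contra hns
    rw [tsum_eq_zero_of_not_summable hns, mul_zero] at h
    exact one_ne_zero h.symm
  have htsum : ∑' i, f i = N := by
    field_simp at h
    linarith [h]
  rw [← ENNReal.ofReal_tsum_of_nonneg hf hsum, htsum]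

/-- quadrature-mirror filter identity. If `|G|` is `2πℤⁿ`-periodic,
`φ̂(2ξ) = G(ξ)φ̂(ξ)` a.e., and `(1/n!) Σ_{q∈2πℤⁿ} |φ̂(ξ+q)|² = 1` a.e., then
`Σ_{p ∈ {0,π}ⁿ} |G(ξ+p)|² = 1` for a.e. `ξ`. -/
theorem stmt13 (n : ℕ) (G φh : (Fin n → ℝ) → ℂ) (hG : Measurable G)
    (hGper : ∀ (ξ : Fin n → ℝ) (q : Fin n → ℤ),
      ‖G (ξ + fun i => 2 * π * (q i : ℝ))‖ = ‖G ξ‖)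
    (htwoscale : ∀ᵐ ξ : Fin n → ℝ, φh ((2 : ℝ) • ξ) = G ξ * φh ξ)
    (hON : ∀ᵐ ξ : Fin n → ℝ,
      (n.factorial : ℝ)⁻¹ *
        ∑' q : Fin n → ℤ, ‖φh (ξ + fun i => 2 * π * (q i : ℝ))‖ ^ 2 = 1) :
    ∀ᵐ ξ : Fin n → ℝ,
      ∑ ε : Fin n → Bool,
        ‖G (ξ + fun i => if ε i then π else 0)‖ ^ 2 = 1 := by
  have hNpos : (0 : ℝ) < (n.factorial : ℝ) := by positivity
  -- translations are quasi-measure-preserving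
  have hQMP : ∀ c : Fin n → ℝ,
      Measure.QuasiMeasurePreserving (fun ξ : Fin n → ℝ => ξ + c) volume volume :=
    fun c => (measurePreserving_add_right volume c).quasiMeasurePreserving
  have hsmul : Measure.QuasiMeasurePreserving (fun ξ : Fin n → ℝ => (2:ℝ) • ξ)
      volume volume :=
    MeasureTheory.Measure.quasiMeasurePreserving_smul volume (two_ne_zero (α := ℝ))
  -- transfer the a.e. hypotheses to all relevant translated/dilated points
  have h1 : ∀ᵐ ξ : Fin n → ℝ, ∀ q : Fin n → ℤ,
      φh ((2:ℝ) • (ξ + fun i => π * (q i : ℝ)))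
        = G (ξ + fun i => π * (q i : ℝ)) * φh (ξ + fun i => π * (q i : ℝ)) :=
    ae_all_iff.2 fun q => (hQMP (fun i => π * (q i : ℝ))).tendsto_ae.eventually htwoscale
  have h2 : ∀ᵐ ξ : Fin n → ℝ, ∀ ε : Fin n → Bool,
      (n.factorial : ℝ)⁻¹ * ∑' q : Fin n → ℤ,
        ‖φh ((ξ + fun i => if ε i then π else 0) + fun i => 2 * π * (q i : ℝ))‖ ^ 2 = 1 :=
    ae_all_iff.2 fun ε => (hQMP (fun i => if ε i then π else 0)).tendsto_ae.eventually hON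
  have h3 : ∀ᵐ ξ : Fin n → ℝ,
      (n.factorial : ℝ)⁻¹ * ∑' q : Fin n → ℤ,
        ‖φh ((2:ℝ) • ξ + fun i => 2 * π * (q i : ℝ))‖ ^ 2 = 1 :=
    hsmul.tendsto_ae.eventually hON
  filter_upwards [h1, h2, h3] with ξ h1 h2 h3
  -- notation
  set δ : (Fin n → Bool) → (Fin n → ℝ) := fun ε i => if ε i then π else 0 with hδ
  -- The key ℝ≥0∞ computation.
  have key : ∑ ε : Fin n → Bool,
      ENNReal.ofReal (‖G (ξ + δ ε)‖ ^ 2) * ENNReal.ofReal (n.factorial : ℝ)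
        = ENNReal.ofReal (n.factorial : ℝ) := by
    have hL : ∑' q : Fin n → ℤ,
        ENNReal.ofReal (‖φh ((2:ℝ) • ξ + fun i => 2 * π * (q i : ℝ))‖ ^ 2)
          = ENNReal.ofReal (n.factorial : ℝ) :=
      stmt13_tsum_ofReal _ (fun q => by positivity) hNpos h3
    -- rewrite each term using the two-scale relation
    have hterm : ∀ q : Fin n → ℤ,
        ENNReal.ofReal (‖φh ((2:ℝ) • ξ + fun i => 2 * π * (q i : ℝ))‖ ^ 2)
          = ENNReal.ofReal (‖G (ξ + fun i => π * (q i : ℝ))‖ ^ 2)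
            * ENNReal.ofReal (‖φh (ξ + fun i => π * (q i : ℝ))‖ ^ 2) := by
      intro q
      have harg : (2:ℝ) • ξ + (fun i => 2 * π * (q i : ℝ))
          = (2:ℝ) • (ξ + fun i => π * (q i : ℝ)) := by
        funext i; simp [Pi.smul_apply, smul_eq_mul]; ring
      rw [harg, h1 q, ← ENNReal.ofReal_mul (by positivity)]
      congr 1
      rw [norm_mul]; ring
    rw [tsum_congr hterm] at hL
    -- reindex by the parity equivalence
    rw [← (stmt13Equiv n).tsum_eq, ENNReal.tsum_prod', tsum_fintype] at hL
    -- compute each inner sum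
    refine Eq.trans (Finset.sum_congr rfl fun ε _ => ?_).symm hL
    have harg2 : ∀ m : Fin n → ℤ,
        (ξ + fun i => π * ((stmt13Equiv n (ε, m)) i : ℝ))
          = (ξ + δ ε) + fun i => 2 * π * ((m i : ℝ)) := by
      intro m
      funext i
      simp only [stmt13Equiv, Equiv.coe_fn_mk, Pi.add_apply, hδ]
      push_cast
      cases h : ε i <;> simp [h] <;> ring
    have hGconst : ∀ m : Fin n → ℤ,
        ‖G (ξ + fun i => π * ((stmt13Equiv n (ε, m)) i : ℝ))‖ = ‖G (ξ + δ ε)‖ := by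
      intro m; rw [harg2 m]; exact hGper (ξ + δ ε) m
    calc ∑' m : Fin n → ℤ,
          ENNReal.ofReal (‖G (ξ + fun i => π * ((stmt13Equiv n (ε, m)) i : ℝ))‖ ^ 2)
            * ENNReal.ofReal (‖φh (ξ + fun i => π * ((stmt13Equiv n (ε, m)) i : ℝ))‖ ^ 2)
        = ∑' m : Fin n → ℤ, ENNReal.ofReal (‖G (ξ + δ ε)‖ ^ 2)
            * ENNReal.ofReal (‖φh ((ξ + δ ε) + fun i => 2 * π * ((m i : ℝ)))‖ ^ 2) := by
          refine tsum_congr fun m => ?_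
          rw [hGconst m, harg2 m]
      _ = ENNReal.ofReal (‖G (ξ + δ ε)‖ ^ 2) * ENNReal.ofReal (n.factorial : ℝ) := by
          rw [ENNReal.tsum_mul_left,
            stmt13_tsum_ofReal _ (fun m => by positivity) hNpos (h2 ε)]
  -- cancel the factor `n!` and come back to the reals
  have hN0 : ENNReal.ofReal (n.factorial : ℝ) ≠ 0 := (ENNReal.ofReal_pos.2 hNpos).ne'
  have hNtop : ENNReal.ofReal (n.factorial : ℝ) ≠ ⊤ := ENNReal.ofReal_ne_top
  have key2 : ∑ ε : Fin n → Bool, ENNReal.ofReal (‖G (ξ + δ ε)‖ ^ 2) = 1 := by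
    rw [← Finset.sum_mul] at key
    exact (ENNReal.mul_left_inj hN0 hNtop).1 (by rw [key, one_mul])
  have key3 : ENNReal.ofReal (∑ ε : Fin n → Bool, ‖G (ξ + δ ε)‖ ^ 2)
      = ENNReal.ofReal 1 := by
    rw [ENNReal.ofReal_sum_of_nonneg (fun ε _ => by positivity), key2, ENNReal.ofReal_one]
  have := (ENNReal.ofReal_eq_ofReal_iff
    (Finset.sum_nonneg fun ε _ => by positivity) zero_le_one).1 key3
  exact this
end

section
/- Given a measurable function g : D → ℂ^r on a measurable set D ⊆ ℝⁿ with |g(ξ)| = 1 for a.e. ξ, there exist measurable functions g¹, …, g^{r−1} : D → ℂ^r such that for a.e. ξ the vectors g(ξ), g¹(ξ), …, g^{r−1}(ξ) form an orthonormal basis of ℂ^r; i.e., one can measurably complete an a.e.-unit measurable vector field to an a.e. unitary matrix-valued function. -/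
open MeasureTheory

noncomputable instance (r : ℕ) : MeasurableSpace (EuclideanSpace ℂ (Fin r)) := borel _
instance (r : ℕ) : BorelSpace (EuclideanSpace ℂ (Fin r)) := ⟨rfl⟩


local notation "⟪" x ", " y "⟫" => @inner ℂ _ _ x y

section aux
variable {E : Type*} [NormedAddCommGroup E] [InnerProductSpace ℂ E]

open scoped Classical in
/-- Householder-type reflection sending (under suitable hypotheses) `v` to `w`. -/
noncomputable def hh (u x : E) : E :=
  if u = 0 then x else x - ((2 / (‖u‖ : ℂ) ^ 2) * ⟪u, x⟫) • u

lemma hh_inner (u x y : E) : ⟪hh u x, hh u y⟫ = ⟪x, y⟫ := by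
  classical
  unfold hh
  by_cases h : u = 0
  · simp [h]
  · rw [if_neg h, if_neg h]
    have hu : (‖u‖ : ℂ) ≠ 0 := by
      simpa using fun hc => h (norm_eq_zero.mp hc)
    have huu : ⟪u, u⟫ = (‖u‖ : ℂ) ^ 2 := inner_self_eq_norm_sq_to_K u
    simp only [inner_sub_left, inner_sub_right, inner_smul_left, inner_smul_right,
      map_mul, map_div₀, map_ofNat, map_pow, Complex.conj_ofReal, inner_conj_symm, huu]
    field_simp
    ring
end aux

lemma hh_maps {E : Type*} [NormedAddCommGroup E] [InnerProductSpace ℂ E]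
    (v w : E) (hv : ‖v‖ = 1) (hw : ‖w‖ = 1)
    (hreal : (starRingEnd ℂ) ⟪v, w⟫ = ⟪v, w⟫) : hh (v - w) v = w := by
  classical
  unfold hh
  by_cases h : v - w = 0
  · simp [h, sub_eq_zero.mp h]
  · rw [if_neg h]
    have hu : (‖v - w‖ : ℂ) ≠ 0 := by
      simpa using fun hc => h (norm_eq_zero.mp hc)
    have hvv : ⟪v, v⟫ = 1 := by
      rw [inner_self_eq_norm_sq_to_K, hv]; norm_num
    have hww : ⟪w, w⟫ = 1 := by
      rw [inner_self_eq_norm_sq_to_K, hw]; norm_num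
    have hwv : ⟪w, v⟫ = ⟪v, w⟫ := by rw [← inner_conj_symm, hreal]
    have huu : (‖v - w‖ : ℂ) ^ 2 = 2 - 2 * ⟪v, w⟫ := by
      have h2 : (‖v - w‖ : ℂ) ^ 2 = ⟪v - w, v - w⟫ :=
        (inner_self_eq_norm_sq_to_K (v - w)).symm
      rw [h2]
      simp only [inner_sub_left, inner_sub_right, hvv, hww, hwv]
      ring
    have huv : ⟪v - w, v⟫ = 1 - ⟪v, w⟫ := by
      simp only [inner_sub_left, hvv, hwv]
    have hcoef : (2 / (‖v - w‖ : ℂ) ^ 2) * ⟪v - w, v⟫ = 1 := by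
      rw [huu, huv]
      have h2 : (2 : ℂ) - 2 * ⟪v, w⟫ ≠ 0 := by rw [← huu]; exact pow_ne_zero 2 hu
      field_simp
      have h3 : (1:ℂ) - ⟪v, w⟫ ≠ 0 := fun h => h2 (by linear_combination 2 * h)
      exact div_self h3
    rw [hcoef, one_smul]
    abel


/-- measurable completion to an a.e. unitary matrix. Given a measurable
set `D ⊆ ℝⁿ` and a measurable `g : D → ℂ^r` with `‖g(ξ)‖ = 1` a.e. on `D`, there are
measurable functions `g¹, …, g^{r−1}` such that for a.e. `ξ ∈ D` the vectors
`g(ξ), g¹(ξ), …, g^{r−1}(ξ)` form an orthonormal basis of `ℂ^r`. -/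
theorem stmt16 (n r : ℕ) (hr : 0 < r) (D : Set (Fin n → ℝ)) (hD : MeasurableSet D)
    (g : (Fin n → ℝ) → EuclideanSpace ℂ (Fin r)) (hg : Measurable g)
    (hnorm : ∀ᵐ ξ ∂(volume.restrict D), ‖g ξ‖ = 1) :
    ∃ G : Fin r → (Fin n → ℝ) → EuclideanSpace ℂ (Fin r),
      (∀ i, Measurable (G i)) ∧ G ⟨0, hr⟩ = g ∧
      ∀ᵐ ξ ∂(volume.restrict D), Orthonormal ℂ (fun i => G i ξ) := by
  classical
  let e : Fin r → EuclideanSpace ℂ (Fin r) := fun i => EuclideanSpace.single i 1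
  set z : Fin r := ⟨0, hr⟩ with hz
  set t : (Fin n → ℝ) → ℂ := fun ξ => ⟪e z, g ξ⟫ with ht_def
  set c : (Fin n → ℝ) → ℂ :=
    fun ξ => if t ξ = 0 then 1 else (starRingEnd ℂ) (t ξ) / (‖t ξ‖ : ℂ) with hc_def
  set u : (Fin n → ℝ) → EuclideanSpace ℂ (Fin r) := fun ξ => e z - c ξ • g ξ with hu_def
  have ht : Measurable t := Measurable.inner measurable_const hg
  have hc : Measurable c := by
    refine Measurable.ite (ht (measurableSet_singleton 0)) measurable_const ?_
    exact (Complex.continuous_conj.measurable.comp ht).div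
      (Complex.measurable_ofReal.comp ht.norm)
  have hu : Measurable u := measurable_const.sub (hc.smul hg)
  have he_norm : ∀ i, ‖e i‖ = 1 := by
    intro i
    simp only [e, EuclideanSpace.norm_single, norm_one]
  have he_inner : ∀ i j : Fin r, ⟪e i, e j⟫ = if i = j then 1 else 0 := by
    intro i j
    rcases eq_or_ne i j with h | h
    · subst h
      rw [if_pos rfl, inner_self_eq_norm_sq_to_K, he_norm]
      norm_num
    · rw [if_neg h]
      simp only [e, EuclideanSpace.inner_single_left, EuclideanSpace.single_apply]
      rw [if_neg h, mul_zero]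
  refine ⟨fun i => if i = z then g else fun ξ => hh (u ξ) (e i), ?_, by simp, ?_⟩
  · intro i
    by_cases hi : i = z
    · simpa [hi] using hg
    · simp only [if_neg hi, hh]
      refine Measurable.ite (measurableSet_eq_fun hu measurable_const) measurable_const ?_
      refine Measurable.sub measurable_const (Measurable.fun_smul ?_ hu)
      refine Measurable.mul ?_ (Measurable.inner hu measurable_const)
      exact measurable_const.div ((Complex.measurable_ofReal.comp hu.norm).pow_const 2)
  · filter_upwards [hnorm] with ξ hgn
    simp only [apply_ite (fun f : (Fin n → ℝ) → EuclideanSpace ℂ (Fin r) => f ξ)]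
    have hcn : ‖c ξ‖ = 1 := by
      by_cases h0 : t ξ = 0
      · simp [hc_def, h0]
      · have hn0 : ‖t ξ‖ ≠ 0 := by simpa using h0
        simp only [hc_def, if_neg h0, norm_div, RCLike.norm_conj, Complex.norm_real,
          Real.norm_eq_abs, abs_norm]
        exact div_self hn0
    have hc0 : c ξ ≠ 0 := fun h => by rw [h] at hcn; simp at hcn
    have hw : ‖c ξ • g ξ‖ = 1 := by rw [norm_smul, hcn, hgn, one_mul]
    have hiw : ⟪e z, c ξ • g ξ⟫ = ((‖t ξ‖ : ℝ) : ℂ) := by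
      rw [inner_smul_right]
      show c ξ * t ξ = ((‖t ξ‖ : ℝ) : ℂ)
      by_cases h0 : t ξ = 0
      · rw [h0]; simp
      · have hnz : (‖t ξ‖ : ℂ) ≠ 0 := by simpa using h0
        simp only [hc_def, if_neg h0]
        rw [div_mul_eq_mul_div, mul_comm, Complex.mul_conj']
        rw [sq, mul_div_assoc, div_self hnz, mul_one]
    have hreal : (starRingEnd ℂ) ⟪e z, c ξ • g ξ⟫ = ⟪e z, c ξ • g ξ⟫ := by
      rw [hiw, Complex.conj_ofReal]
    have hmap : hh (u ξ) (e z) = c ξ • g ξ :=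
      hh_maps (e z) (c ξ • g ξ) (he_norm z) hw hreal
    have hgw : g ξ = (c ξ)⁻¹ • (c ξ • g ξ) := by
      rw [smul_smul, inv_mul_cancel₀ hc0, one_smul]
    rw [orthonormal_iff_ite]
    intro i j
    rcases eq_or_ne i z with hi | hi <;> rcases eq_or_ne j z with hj | hj
    · subst hi; subst hj
      rw [if_pos rfl]
      rw [inner_self_eq_norm_sq_to_K, hgn]
      norm_num
    · subst hi
      rw [if_pos rfl, if_neg hj, if_neg (fun h => hj h.symm)]
      rw [hgw, inner_smul_left, ← hmap, hh_inner, he_inner, if_neg (fun h => hj h.symm),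
        mul_zero]
    · subst hj
      rw [if_neg hi, if_pos rfl, if_neg hi]
      rw [hgw, inner_smul_right, ← hmap, hh_inner, he_inner, if_neg hi, mul_zero]
    · rw [if_neg hi, if_neg hj, hh_inner, he_inner]
end
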